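/- Let η be an L-subgroup of μ that is both pronormal and subnormal in μ. Then η is a normal L-subgroup of μ. -/

import Mathlib

open scoped Classical

section Defs

variable {G : Type*} [Group G] {L : Type*} [CompletelyDistribLattice L]

/-- `μ` is an `L`-subgroup of the group `G`. -/
def IsLSubgroup (μ : G → L) : Prop :=
  (∀ x y : G, μ x ⊓ μ y ≤ μ (x * y)) ∧ (∀ x : G, μ x⁻¹ = μ x)

/-- The conjugate `η^{a_z}` of `η` by the `L`-point `a_z`. -/
def LConj (η : G → L) (a : L) (z : G) : G → L :=
  fun x => a ⊓ η (z * x * z⁻¹)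

/-- The `L`-subgroup generated by the `L`-subset `η`. -/
def LGen (η : G → L) : G → L :=
  fun x => ⨅ θ ∈ {θ : G → L | IsLSubgroup θ ∧ η ≤ θ}, θ x

/-- `η` is a pronormal `L`-subgroup of `μ`. -/
def IsLPronormal (μ η : G → L) : Prop :=
  IsLSubgroup η ∧ η ≤ μ ∧
    ∀ (a : L) (x : G), a ≤ μ x →
      ∃ (b : L) (y : G), b ≤ LGen (η ⊔ LConj η a x) y ∧ LConj η b y = LConj η a x

/-- `η` is a normal `L`-subgroup of `μ`. -/
def IsLNormal (μ η : G → L) : Prop :=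
  IsLSubgroup η ∧ η ≤ μ ∧ ∀ x y : G, η x ⊓ μ y ≤ η (y * x * y⁻¹)

/-- Set product of two `L`-subsets. -/
def LSetProd (η ν : G → L) : G → L :=
  fun x => ⨆ y : G, ⨆ z : G, ⨆ _ : y * z = x, η y ⊓ ν z

/-- The normalizer `N(η)` of `η` in `μ`. -/
def LNormalizer (μ η : G → L) : G → L :=
  fun z => sSup {a : L | a ≤ μ z ∧ LConj η a z ≤ η}

/-- The conjugate `μημ⁻¹` of `η` in `μ`. -/
def LConjAll (μ η : G → L) : G → L :=
  fun x => ⨆ z : G, ⨆ y : G, ⨆ _ : x = z * y * z⁻¹, η y ⊓ μ z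

/-- The normal closure `η^μ` of `η` in `μ`. -/
def LNormalClosure (μ η : G → L) : G → L := LGen (LConjAll μ η)

/-- The normal closure series `η₀ = μ`, `ηᵢ₊₁ = η^{ηᵢ}`. -/
def LNcSeries (μ η : G → L) : ℕ → (G → L)
  | 0 => μ
  | n + 1 => LNormalClosure (LNcSeries μ η n) η

/-- `η` is a subnormal `L`-subgroup of `μ`. -/
def IsLSubnormal (μ η : G → L) : Prop := ∃ m : ℕ, LNcSeries μ η m = η

/-- The commutator `(η, θ)` of two `L`-subsets. -/
noncomputable def LCommFun (η θ : G → L) : G → L :=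
  fun x =>
    if ∃ y z : G, x = y * z * y⁻¹ * z⁻¹ then
      ⨆ y : G, ⨆ z : G, ⨆ _ : x = y * z * y⁻¹ * z⁻¹, η y ⊓ θ z
    else (⨅ g : G, η g) ⊓ (⨅ g : G, θ g)

/-- The descending central chain `Z₀(μ) = μ`, `Zᵢ₊₁(μ) = [Zᵢ(μ), μ]`. -/
noncomputable def LDcc (μ : G → L) : ℕ → (G → L)
  | 0 => μ
  | n + 1 => LGen (LCommFun (LDcc μ n) μ)

/-- The trivial `L`-subgroup with the same tip and tail as `μ`. -/
noncomputable def LTrivial (μ : G → L) : G → L :=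
  fun x => if x = 1 then μ 1 else ⨅ g : G, μ g

/-- `μ` is a nilpotent `L`-group. -/
def IsLNilpotent (μ : G → L) : Prop := ∃ n : ℕ, LDcc μ n = LTrivial μ

/-- Sup-property of an `L`-subset. -/
def SupProp (μ : G → L) : Prop :=
  ∀ A : Set G, A.Nonempty → ∃ a ∈ A, μ a = ⨆ x ∈ A, μ x

end Defs

/-- Image of an `L`-subset under a map. -/
def LImage {G H L : Type*} [CompleteLattice L] (f : G → H) (μ : G → L) : H → L :=
  fun y => ⨆ x : G, ⨆ _ : f x = y, μ x

section Aux

variable {G : Type*} [Group G] {L : Type*} [CompletelyDistribLattice L]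

lemma le_lgen (η : G → L) : η ≤ LGen η :=
  fun x => le_iInf fun _ => le_iInf fun hθ => hθ.2 x

lemma lgen_le {η θ : G → L} (hθ : IsLSubgroup θ) (h : η ≤ θ) : LGen η ≤ θ :=
  fun x => iInf₂_le θ ⟨hθ, h⟩

lemma lsub_le_one {μ : G → L} (h : IsLSubgroup μ) (g : G) : μ g ≤ μ 1 := by
  have h1 := h.1 g g⁻¹
  rw [h.2 g] at h1
  simpa using h1

lemma lsub_conj {μ : G → L} (h : IsLSubgroup μ) (g x : G) :
    μ g ⊓ μ x ≤ μ (x * g * x⁻¹) := by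
  have h1 : μ x ⊓ μ g ≤ μ (x * g) := h.1 x g
  have h2 : μ (x * g) ⊓ μ x⁻¹ ≤ μ (x * g * x⁻¹) := h.1 (x * g) x⁻¹
  rw [h.2 x] at h2
  calc μ g ⊓ μ x ≤ (μ x ⊓ μ g) ⊓ μ x := le_inf (le_inf inf_le_right inf_le_left) inf_le_right
    _ ≤ μ (x * g) ⊓ μ x := inf_le_inf_right _ h1
    _ ≤ μ (x * g * x⁻¹) := h2

lemma lgen_subgroup (η : G → L) : IsLSubgroup (LGen η) := by
  constructor
  · intro x y
    refine le_iInf fun θ => le_iInf fun hθ => ?_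
    have hx : LGen η x ≤ θ x := iInf₂_le θ hθ
    have hy : LGen η y ≤ θ y := iInf₂_le θ hθ
    exact le_trans (inf_le_inf hx hy) (hθ.1.1 x y)
  · intro x
    have key : ∀ z : G, LGen η z⁻¹ ≤ LGen η z := by
      intro z
      refine le_iInf fun θ => le_iInf fun hθ => ?_
      have hx : LGen η z⁻¹ ≤ θ z⁻¹ := iInf₂_le θ hθ
      rw [hθ.1.2 z] at hx
      exact hx
    refine le_antisymm (key x) ?_
    have := key x⁻¹
    rwa [inv_inv] at this

lemma lnc_chain {μ η : G → L} (hμ : IsLSubgroup μ) (hη : IsLSubgroup η) (hle : η ≤ μ) :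
    ∀ i, IsLSubgroup (LNcSeries μ η i) ∧ η ≤ LNcSeries μ η i ∧ LNcSeries μ η i ≤ μ := by
  intro i
  induction i with
  | zero => exact ⟨hμ, hle, le_refl _⟩
  | succ n ih =>
    obtain ⟨hsg, hηn, hnμ⟩ := ih
    set ν := LNcSeries μ η n with hν
    have hsg' : IsLSubgroup (LNcSeries μ η (n + 1)) := lgen_subgroup _
    have hconjle : LConjAll ν η ≤ ν := by
      intro w
      refine iSup_le fun z => iSup_le fun y => iSup_le fun hw => ?_
      subst hw
      exact le_trans (inf_le_inf_right _ (hηn y)) (lsub_conj hsg y z)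
    have hsub' : LNcSeries μ η (n + 1) ≤ ν := lgen_le hsg hconjle
    refine ⟨hsg', ?_, le_trans hsub' hnμ⟩
    intro g
    have h1 : η g ≤ LConjAll ν η g := by
      have : η g ≤ η g ⊓ ν (1 : G) :=
        le_inf le_rfl (le_trans (hηn g) (lsub_le_one hsg g))
      refine le_trans this ?_
      have heq : g = (1 : G) * g * (1 : G)⁻¹ := by group
      calc η g ⊓ ν 1 ≤ ⨆ _ : g = (1:G) * g * (1:G)⁻¹, η g ⊓ ν 1 := le_iSup_of_le heq le_rfl
        _ ≤ ⨆ y, ⨆ _ : g = (1:G) * y * (1:G)⁻¹, η y ⊓ ν 1 := le_iSup_of_le g le_rfl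
        _ ≤ LConjAll ν η g := le_iSup_of_le 1 le_rfl
    exact le_trans h1 (le_lgen _ g)

lemma lnc_step {μ η : G → L} (hμ : IsLSubgroup μ) (hpro : IsLPronormal μ η) (i : ℕ)
    (ih : ∀ g x : G, η g ⊓ LNcSeries μ η (i + 1) x ≤ η (x * g * x⁻¹)) :
    ∀ g x : G, η g ⊓ LNcSeries μ η i x ≤ η (x * g * x⁻¹) := by
  obtain ⟨hη, hle, hp⟩ := hpro
  have chain := lnc_chain hμ hη hle
  intro g x
  set νi := LNcSeries μ η i with hνi
  set ν := LNcSeries μ η (i + 1) with hν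
  set a := η g ⊓ νi x with ha
  have hax : a ≤ μ x := le_trans inf_le_right ((chain i).2.2 x)
  obtain ⟨b, z, hb, heq⟩ := hp a x hax
  -- LConj η a x ≤ LConjAll νi η
  have hconj_le : LConj η a x ≤ LConjAll νi η := by
    intro w
    have hw : w = x⁻¹ * (x * w * x⁻¹) * x⁻¹⁻¹ := by group
    have haxi : a ≤ νi x⁻¹ := by
      rw [hνi, (chain i).1.2 x]; exact inf_le_right
    calc LConj η a x w = a ⊓ η (x * w * x⁻¹) := rfl
      _ ≤ η (x * w * x⁻¹) ⊓ νi x⁻¹ := le_inf inf_le_right (le_trans inf_le_left haxi)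
      _ ≤ ⨆ _ : w = x⁻¹ * (x * w * x⁻¹) * x⁻¹⁻¹, η (x * w * x⁻¹) ⊓ νi x⁻¹ :=
          le_iSup_of_le hw le_rfl
      _ ≤ ⨆ y, ⨆ _ : w = x⁻¹ * y * x⁻¹⁻¹, η y ⊓ νi x⁻¹ := le_iSup_of_le (x * w * x⁻¹) le_rfl
      _ ≤ LConjAll νi η w := le_iSup_of_le x⁻¹ le_rfl
  have hgen_le : LGen (η ⊔ LConj η a x) ≤ ν := by
    refine lgen_le (chain (i + 1)).1 (sup_le (chain (i + 1)).2.1 ?_)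
    exact le_trans hconj_le (le_lgen _)
  have hbz : b ≤ ν z := le_trans hb (hgen_le z)
  -- evaluate heq at 1 : b ⊓ η 1 = a ⊓ η 1
  have h1 : b ⊓ η 1 = a ⊓ η 1 := by
    have := congrFun heq 1
    simpa [LConj] using this
  have haη1 : a ≤ η 1 := le_trans inf_le_left (lsub_le_one hη g)
  have hab : a ≤ b := by
    rw [inf_eq_left.mpr haη1] at h1
    rw [← h1]; exact inf_le_left
  -- evaluate heq at g
  have hg : b ⊓ η (z * g * z⁻¹) = a ⊓ η (x * g * x⁻¹) := congrFun heq g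
  have key : a ≤ η (x * g * x⁻¹) := by
    have h2 : a ≤ b ⊓ (η g ⊓ ν z) :=
      le_inf hab (le_inf inf_le_left (le_trans hab hbz))
    have h3 : b ⊓ (η g ⊓ ν z) ≤ b ⊓ η (z * g * z⁻¹) :=
      inf_le_inf_left _ (ih g z)
    calc a ≤ b ⊓ η (z * g * z⁻¹) := le_trans h2 h3
      _ = a ⊓ η (x * g * x⁻¹) := hg
      _ ≤ η (x * g * x⁻¹) := inf_le_right
  exact key

end Aux

theorem stmt17 {G : Type*} [Group G] {L : Type*} [CompletelyDistribLattice L]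
    (μ η : G → L) (hμ : IsLSubgroup μ)
    (hpro : IsLPronormal μ η) (hsub : IsLSubnormal μ η) :
    IsLNormal μ η := by
  obtain ⟨m, hm⟩ := hsub
  refine ⟨hpro.1, hpro.2.1, ?_⟩
  have main : ∀ k, k ≤ m → ∀ g x : G, η g ⊓ LNcSeries μ η (m - k) x ≤ η (x * g * x⁻¹) := by
    intro k
    induction k with
    | zero =>
      intro _ g x
      simpa [Nat.sub_zero, hm] using lsub_conj hpro.1 g x
    | succ n ih =>
      intro hn g x
      have hn' : n ≤ m := Nat.le_of_succ_le hn
      have hsubst : m - n = (m - (n + 1)) + 1 := by omega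
      have ih' : ∀ g x : G, η g ⊓ LNcSeries μ η ((m - (n + 1)) + 1) x ≤ η (x * g * x⁻¹) := by
        rw [← hsubst]; exact ih hn'
      exact lnc_step hμ hpro (m - (n + 1)) ih' g x
  intro x y
  have := main m le_rfl x y
  simpa [LNcSeries] using this
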